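/- Let λ₁,...,λ₄, μ₁,...,μ₄ ∈ R with λ₂ = λ₃, μ₂ = μ₃, and let (b, c) ≠ (0,0). The binary quadratic form −(αλ₂ + βμ₂)x² − (α(λ₄−λ₁) + β(μ₄−μ₁))xy + (αλ₂ + βμ₂)y² is proportional to the form −b·x² − c·xy + b·y² for all (α, β) if and only if b(λ₄ − λ₁) − cλ₂ = 0 and b(μ₄ − μ₁) − cμ₂ = 0. -/

import Mathlib

/-- The ν-principal configurations all agree with the asymptotic configuration iff
`b(λ₄−λ₁) − cλ₂ = 0` and `b(μ₄−μ₁) − cμ₂ = 0`. -/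
theorem stmt10 (l1 l2 l4 m1 m2 m4 b c : ℝ) (hbc : (b, c) ≠ (0, 0)) :
    (∀ α β : ℝ, ∃ t : ℝ, ∀ x y : ℝ,
      -(α * l2 + β * m2) * x ^ 2 - (α * (l4 - l1) + β * (m4 - m1)) * x * y +
        (α * l2 + β * m2) * y ^ 2 =
      t * (-(b * x ^ 2) - c * x * y + b * y ^ 2)) ↔
    (b * (l4 - l1) - c * l2 = 0 ∧ b * (m4 - m1) - c * m2 = 0) := by
  constructor
  · intro h
    have key : ∀ α β : ℝ, b * (α * (l4 - l1) + β * (m4 - m1)) - c * (α * l2 + β * m2) = 0 := by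
      intro α β
      obtain ⟨t, ht⟩ := h α β
      have h1 := ht 1 0
      have h2 := ht 1 1
      linear_combination c * h1 - b * h2
    constructor
    · have := key 1 0; linear_combination this
    · have := key 0 1; linear_combination this
  · rintro ⟨h1, h2⟩ α β
    rcases eq_or_ne b 0 with hb | hb
    · have hc : c ≠ 0 := by
        intro hc; exact hbc (by simp [hb, hc])
      have hl2 : l2 = 0 := by
        have : c * l2 = 0 := by linear_combination (l4 - l1) * hb - h1
        exact (mul_eq_zero.mp this).resolve_left hc
      have hm2 : m2 = 0 := by
        have : c * m2 = 0 := by linear_combination (m4 - m1) * hb - h2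
        exact (mul_eq_zero.mp this).resolve_left hc
      refine ⟨(α * (l4 - l1) + β * (m4 - m1)) / c, fun x y => ?_⟩
      field_simp [hl2, hm2, hb]
      subst hl2 hm2 hb; ring
    · refine ⟨(α * l2 + β * m2) / b, fun x y => ?_⟩
      have e1 : b * (l4 - l1) = c * l2 := by linarith
      have e2 : b * (m4 - m1) = c * m2 := by linarith
      field_simp
      linear_combination (-(x * y) * α) * e1 + (-(x * y) * β) * e2
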